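/- arXiv:2003.06912 — 3 statements merged into one kernel-verified Lean document; each statement's English description precedes it below -/
import Mathlib

section
/- (First part of Proposition 3.1, the convergence lemma.) Let (U, μ) be a finite measure space and let p_s : U → ℝ be measurable with p_s ∈ L²(U). Suppose {Zⁿ}, {Dⁿ} ⊂ L²(U; M₃) and {p_fⁿ} ⊂ L²(U) are sequences such that: (i) for each n, Zⁿ = τ(p_fⁿ) Dⁿ/(|Dⁿ| + 1/n) a.e. in U, where τ(p) := (p_s − p)⁺; (ii) Zⁿ converges weakly in L²(U; M₃) to some Z; (iii) Dⁿ converges weakly in L²(U; M₃) to some D; (iv) p_fⁿ → p_f strongly in L²(U) and a.e. in U; (v) limsup_{n→∞} ∫_U Zⁿ : Dⁿ dμ ≤ ∫_U Z : D dμ. Then (|Z| − τ(p_f))⁺ + | |D| Z − τ(p_f) D | = 0 a.e. in U. -/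
open MeasureTheory Filter
open scoped RealInnerProductSpace Topology ENNReal

section helpers
variable {α : Type*} [MeasurableSpace α] {μ : Measure α}
variable {E : Type*} [NormedAddCommGroup E] [InnerProductSpace ℝ E]

lemma integrable_inner_of_memL2 {f g : α → E} (hf : MemLp f 2 μ) (hg : MemLp g 2 μ) :
    Integrable (fun x => ⟪f x, g x⟫) μ := by
  have h := MeasureTheory.L2.integrable_inner (𝕜 := ℝ) (hf.toLp f) (hg.toLp g)
  refine h.congr ?_
  filter_upwards [hf.coeFn_toLp, hg.coeFn_toLp] with x h1 h2
  rw [h1, h2]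

lemma integral_inner_eq_L2inner {f g : α → E} (hf : MemLp f 2 μ) (hg : MemLp g 2 μ) :
    ∫ x, ⟪f x, g x⟫ ∂μ = ⟪hf.toLp f, hg.toLp g⟫ := by
  rw [MeasureTheory.L2.inner_def]
  refine integral_congr_ae ?_
  filter_upwards [hf.coeFn_toLp, hg.coeFn_toLp] with x h1 h2
  rw [h1, h2]

lemma abs_integral_inner_le {f g : α → E} (hf : MemLp f 2 μ) (hg : MemLp g 2 μ) :
    |∫ x, ⟪f x, g x⟫ ∂μ| ≤ (eLpNorm f 2 μ).toReal * (eLpNorm g 2 μ).toReal := by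
  rw [integral_inner_eq_L2inner hf hg]
  calc |⟪hf.toLp f, hg.toLp g⟫| ≤ ‖hf.toLp f‖ * ‖hg.toLp g‖ := abs_real_inner_le_norm _ _
    _ = (eLpNorm f 2 μ).toReal * (eLpNorm g 2 μ).toReal := by
        rw [Lp.norm_toLp, Lp.norm_toLp]

lemma integrable_mul_of_memL2 {f g : α → ℝ} (hf : MemLp f 2 μ) (hg : MemLp g 2 μ) :
    Integrable (fun x => f x * g x) μ := by
  have := integrable_inner_of_memL2 (E := ℝ) hf hg
  simpa [RCLike.inner_apply, mul_comm] using this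

lemma abs_integral_mul_le {f g : α → ℝ} (hf : MemLp f 2 μ) (hg : MemLp g 2 μ) :
    |∫ x, f x * g x ∂μ| ≤ (eLpNorm f 2 μ).toReal * (eLpNorm g 2 μ).toReal := by
  have := abs_integral_inner_le (E := ℝ) hf hg
  simpa [RCLike.inner_apply, mul_comm] using this

lemma memL2_pos_part {f g : α → ℝ} (hf : MemLp f 2 μ) (hg : MemLp g 2 μ) :
    MemLp (fun x => max (f x - g x) 0) 2 μ := by
  refine MemLp.of_le (hf.sub hg) ?_ ?_
  · exact ((hf.1.aemeasurable.sub hg.1.aemeasurable).max aemeasurable_const).aestronglyMeasurable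
  · refine ae_of_all _ fun x => ?_
    simp only [Real.norm_eq_abs, Pi.sub_apply]
    rw [abs_of_nonneg (le_max_right _ _)]
    exact max_le (le_abs_self _) (abs_nonneg _)

lemma eLpNorm_pos_part_sub {f g h : α → ℝ} :
    eLpNorm (fun x => max (f x - g x) 0 - max (f x - h x) 0) 2 μ
      ≤ eLpNorm (fun x => g x - h x) 2 μ := by
  refine eLpNorm_mono fun x => ?_
  simp only [Real.norm_eq_abs]
  calc |max (f x - g x) 0 - max (f x - h x) 0| ≤ |(f x - g x) - (f x - h x)| :=
        abs_max_sub_max_le_abs _ _ _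
    _ = |g x - h x| := by rw [abs_sub_comm]; ring_nf

lemma pointwise_reg_lower {t d e : ℝ} (ht : 0 ≤ t) (hd : 0 ≤ d) (he : 0 < e) :
    t * d - e * t ≤ t / (d + e) * (d * d) := by
  rw [div_mul_eq_mul_div, le_div_iff₀ (by linarith)]
  nlinarith [mul_nonneg (mul_nonneg he.le he.le) ht]

lemma pointwise_reg_norm {t d e : ℝ} (ht : 0 ≤ t) (hd : 0 ≤ d) (he : 0 < e) :
    t / (d + e) * d ≤ t := by
  rw [div_mul_eq_mul_div, div_le_iff₀ (by linarith)]
  nlinarith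

end helpers

/-- `M₃`: the space of 3×3 real matrices with the Frobenius inner product. -/
abbrev M3 := EuclideanSpace ℝ (Fin 3 × Fin 3)

set_option maxHeartbeats 1000000 in
/-- First part of Proposition 3.1 (the convergence lemma).  On a finite measure space `(U, μ)`,
with `p_s ∈ L²` measurable, if `Zⁿ = (p_s − p_fⁿ)⁺ Dⁿ/(|Dⁿ| + 1/n)` a.e., `Zⁿ ⇀ Z` and
`Dⁿ ⇀ D` weakly in `L²(U; M₃)`, `p_fⁿ → p_f` strongly in `L²(U)` and a.e., and
`limsup ∫ Zⁿ : Dⁿ ≤ ∫ Z : D`, then `(|Z| − τ(p_f))⁺ + ||D| Z − τ(p_f) D| = 0` a.e.,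
where `τ(p) := (p_s − p)⁺`.  (Sequences are indexed by `n : ℕ`, the regularization
parameter being `1/(n+1)`.) -/
theorem convergence_lemma_plastic_part
    {U : Type*} [MeasurableSpace U] (μ : Measure U) [IsFiniteMeasure μ]
    (ps : U → ℝ) (hps_meas : Measurable ps) (hps_mem : MemLp ps 2 μ)
    (Z D : ℕ → U → M3) (pf : ℕ → U → ℝ)
    (Zlim Dlim : U → M3) (pflim : U → ℝ)
    (hZ_mem : ∀ n, MemLp (Z n) 2 μ) (hD_mem : ∀ n, MemLp (D n) 2 μ)
    (hpf_mem : ∀ n, MemLp (pf n) 2 μ)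
    (hZlim_mem : MemLp Zlim 2 μ) (hDlim_mem : MemLp Dlim 2 μ)
    (hpflim_mem : MemLp pflim 2 μ)
    (hZn : ∀ n : ℕ, ∀ᵐ x ∂μ,
      Z n x = (max (ps x - pf n x) 0 / (‖D n x‖ + 1 / (n + 1))) • D n x)
    (hZ_weak : ∀ A : U → M3, MemLp A 2 μ →
      Tendsto (fun n => ∫ x, ⟪Z n x, A x⟫ ∂μ) atTop (𝓝 (∫ x, ⟪Zlim x, A x⟫ ∂μ)))
    (hD_weak : ∀ A : U → M3, MemLp A 2 μ →
      Tendsto (fun n => ∫ x, ⟪D n x, A x⟫ ∂μ) atTop (𝓝 (∫ x, ⟪Dlim x, A x⟫ ∂μ)))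
    (hpf_strong : Tendsto (fun n => eLpNorm (pf n - pflim) 2 μ) atTop (𝓝 0))
    (hpf_ae : ∀ᵐ x ∂μ, Tendsto (fun n => pf n x) atTop (𝓝 (pflim x)))
    (hlimsup : limsup (fun n => ∫ x, ⟪Z n x, D n x⟫ ∂μ) atTop
      ≤ ∫ x, ⟪Zlim x, Dlim x⟫ ∂μ) :
    ∀ᵐ x ∂μ, max (‖Zlim x‖ - max (ps x - pflim x) 0) 0
      + ‖(‖Dlim x‖) • Zlim x - (max (ps x - pflim x) 0) • Dlim x‖ = 0 := by
  classical
  set τ : ℕ → U → ℝ := fun n x => max (ps x - pf n x) 0 with hτdef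
  set σ : U → ℝ := fun x => max (ps x - pflim x) 0 with hσdef
  have hτ_mem : ∀ n, MemLp (τ n) 2 μ := fun n => memL2_pos_part hps_mem (hpf_mem n)
  have hσ_mem : MemLp σ 2 μ := memL2_pos_part hps_mem hpflim_mem
  have hτ0 : ∀ n x, 0 ≤ τ n x := fun n x => le_max_right _ _
  have hσ0 : ∀ x, 0 ≤ σ x := fun x => le_max_right _ _
  -- strong convergence of the yield stresses
  set δ : ℕ → ℝ := fun n => (eLpNorm (pf n - pflim) 2 μ).toReal with hδdef
  have hδnn : ∀ n, 0 ≤ δ n := fun n => ENNReal.toReal_nonneg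
  have hδ0 : Tendsto δ atTop (𝓝 0) := by
    have := (ENNReal.tendsto_toReal (a := 0) (by simp)).comp hpf_strong
    exact this
  have hτσ : ∀ n, (eLpNorm (fun x => τ n x - σ x) 2 μ).toReal ≤ δ n := by
    intro n
    refine ENNReal.toReal_mono ((hpf_mem n).sub hpflim_mem).2.ne ?_
    have h := eLpNorm_pos_part_sub (μ := μ) (f := ps) (g := fun x => pf n x) (h := pflim)
    exact h
  -- uniform L² bound on D n via Banach–Steinhaus
  obtain ⟨C, hC0, hC⟩ : ∃ C, 0 ≤ C ∧ ∀ n, (eLpNorm (D n) 2 μ).toReal ≤ C := by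
    set DL : ℕ → Lp M3 2 μ := fun n => (hD_mem n).toLp (D n) with hDL
    have hpt : ∀ v : Lp M3 2 μ, ∃ c, ∀ n : ℕ, ‖(innerSL ℝ (DL n)) v‖ ≤ c := by
      intro v
      have hv : MemLp (v : U → M3) 2 μ := Lp.memLp v
      have heq : ∀ n, (innerSL ℝ (DL n)) v = ∫ x, ⟪D n x, v x⟫ ∂μ := by
        intro n
        have h0 : (innerSL ℝ (DL n)) v = ⟪DL n, v⟫ := rfl
        rw [h0, MeasureTheory.L2.inner_def]
        refine integral_congr_ae ?_
        filter_upwards [(hD_mem n).coeFn_toLp] with x hx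
        rw [hx]
      obtain ⟨c, hc⟩ := (hD_weak _ hv).abs.bddAbove_range
      exact ⟨c, fun n => by rw [Real.norm_eq_abs, heq n]; exact hc ⟨n, rfl⟩⟩
    obtain ⟨C', hC'⟩ := banach_steinhaus hpt
    refine ⟨max C' 0, le_max_right _ _, fun n => ?_⟩
    have h1 : (eLpNorm (D n) 2 μ).toReal = ‖DL n‖ := (Lp.norm_toLp _ _).symm
    have h2 : ‖DL n‖ = ‖innerSL ℝ (DL n)‖ := (innerSL_apply_norm (𝕜 := ℝ) (DL n)).symm
    rw [h1, h2]
    exact le_max_of_le_left (hC' n)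
  -- pointwise facts about Z n
  have hnormZ : ∀ n, ∀ᵐ x ∂μ, ‖Z n x‖ ≤ τ n x := by
    intro n
    filter_upwards [hZn n] with x hx
    have he : (0:ℝ) < 1/((n:ℝ)+1) := by positivity
    have h1 : 0 ≤ τ n x := hτ0 n x
    have h2 : (0:ℝ) ≤ ‖D n x‖ := norm_nonneg _
    rw [hx, norm_smul, Real.norm_eq_abs,
      abs_of_nonneg (div_nonneg h1 (by positivity))]
    exact pointwise_reg_norm h1 h2 he
  have hinnerZD : ∀ n, ∀ᵐ x ∂μ,
      τ n x * ‖D n x‖ - (1/((n:ℝ)+1)) * τ n x ≤ ⟪Z n x, D n x⟫ := by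
    intro n
    filter_upwards [hZn n] with x hx
    have he : (0:ℝ) < 1/((n:ℝ)+1) := by positivity
    rw [hx, real_inner_smul_left, real_inner_self_eq_norm_mul_norm]
    exact pointwise_reg_lower (hτ0 n x) (norm_nonneg _) he
  -- key weak-limit inequality
  have hkey : ∀ A : U → M3, MemLp A 2 μ →
      ∫ x, ⟪Zlim x, A x⟫ ∂μ ≤ ∫ x, σ x * ‖A x‖ ∂μ := by
    intro A hA
    have hAn : MemLp (fun x => ‖A x‖) 2 μ := hA.norm
    have hint1 : Integrable (fun x => σ x * ‖A x‖) μ := integrable_mul_of_memL2 hσ_mem hAn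
    have h1 : ∀ n, ∫ x, ⟪Z n x, A x⟫ ∂μ
        ≤ ∫ x, σ x * ‖A x‖ ∂μ + δ n * (eLpNorm A 2 μ).toReal := by
      intro n
      have hτA : Integrable (fun x => τ n x * ‖A x‖) μ :=
        integrable_mul_of_memL2 (hτ_mem n) hAn
      have step1 : ∫ x, ⟪Z n x, A x⟫ ∂μ ≤ ∫ x, τ n x * ‖A x‖ ∂μ := by
        refine integral_mono_ae (integrable_inner_of_memL2 (hZ_mem n) hA) hτA ?_
        filter_upwards [hnormZ n] with x hx
        calc ⟪Z n x, A x⟫ ≤ ‖Z n x‖ * ‖A x‖ := real_inner_le_norm _ _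
          _ ≤ τ n x * ‖A x‖ := mul_le_mul_of_nonneg_right hx (norm_nonneg _)
      have step2 : ∫ x, τ n x * ‖A x‖ ∂μ - ∫ x, σ x * ‖A x‖ ∂μ
          ≤ δ n * (eLpNorm A 2 μ).toReal := by
        have heq : ∫ x, τ n x * ‖A x‖ ∂μ - ∫ x, σ x * ‖A x‖ ∂μ
            = ∫ x, (τ n x - σ x) * ‖A x‖ ∂μ := by
          rw [← integral_sub hτA hint1]
          exact integral_congr_ae (ae_of_all _ fun x => by ring)
        rw [heq]
        have hcs := abs_integral_mul_le ((hτ_mem n).sub hσ_mem) hAn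
        refine le_trans (le_abs_self _) (hcs.trans ?_)
        rw [eLpNorm_norm]
        exact mul_le_mul_of_nonneg_right (hτσ n) ENNReal.toReal_nonneg
      linarith
    have h2 : Tendsto (fun n => ∫ x, σ x * ‖A x‖ ∂μ + δ n * (eLpNorm A 2 μ).toReal) atTop
        (𝓝 (∫ x, σ x * ‖A x‖ ∂μ + 0 * (eLpNorm A 2 μ).toReal)) :=
      tendsto_const_nhds.add (hδ0.mul_const _)
    have := le_of_tendsto_of_tendsto' (hZ_weak A hA) h2 h1
    simpa using this
  -- measurable representatives
  have hpflim_ae := hpflim_mem.1.ae_eq_mk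
  set pflim' := hpflim_mem.1.mk pflim with hpflim'def
  have hpflim'_meas : Measurable pflim' := hpflim_mem.1.measurable_mk
  set σ' : U → ℝ := fun x => max (ps x - pflim' x) 0 with hσ'def
  have hσ'_meas : Measurable σ' := (hps_meas.sub hpflim'_meas).max measurable_const
  have hσσ' : σ =ᵐ[μ] σ' := by
    filter_upwards [hpflim_ae] with x hx
    show max (ps x - pflim x) 0 = max (ps x - pflim' x) 0
    rw [hx]
  have hσ'0 : ∀ x, 0 ≤ σ' x := fun x => le_max_right _ _
  set Z' := hZlim_mem.1.mk Zlim with hZ'def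
  have hZZ' : Zlim =ᵐ[μ] Z' := hZlim_mem.1.ae_eq_mk
  have hZ'_sm : StronglyMeasurable Z' := hZlim_mem.1.stronglyMeasurable_mk
  set D' := hDlim_mem.1.mk Dlim with hD'def
  have hDD' : Dlim =ᵐ[μ] D' := hDlim_mem.1.ae_eq_mk
  have hD'_sm : StronglyMeasurable D' := hDlim_mem.1.stronglyMeasurable_mk
  -- Step 1 : ‖Zlim‖ ≤ σ a.e.
  have step1 : ∀ᵐ x ∂μ, ‖Zlim x‖ ≤ σ x := by
    set S : Set U := {x | σ' x < ‖Z' x‖} with hSdef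
    have hSm : MeasurableSet S := measurableSet_lt hσ'_meas hZ'_sm.measurable.norm
    set A : U → M3 := S.indicator Zlim with hAdef
    have hA_mem : MemLp A 2 μ := hZlim_mem.indicator hSm
    have hkeyA := hkey A hA_mem
    have hintZA : Integrable (fun x => ⟪Zlim x, A x⟫) μ :=
      integrable_inner_of_memL2 hZlim_mem hA_mem
    have hintσA : Integrable (fun x => σ x * ‖A x‖) μ :=
      integrable_mul_of_memL2 hσ_mem hA_mem.norm
    have hg_nonneg : ∀ᵐ x ∂μ, 0 ≤ ⟪Zlim x, A x⟫ - σ x * ‖A x‖ := by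
      filter_upwards [hσσ', hZZ'] with x h1 h2
      by_cases hx : x ∈ S
      · rw [hAdef]
        rw [Set.indicator_of_mem hx, real_inner_self_eq_norm_mul_norm]
        have hlt : σ' x < ‖Z' x‖ := hx
        rw [h1, h2]
        nlinarith [norm_nonneg (Z' x), hσ'0 x]
      · rw [hAdef, Set.indicator_of_notMem hx]
        simp
    have hg0 : ∀ᵐ x ∂μ, ⟪Zlim x, A x⟫ - σ x * ‖A x‖ = 0 := by
      have hgi : Integrable (fun x => ⟪Zlim x, A x⟫ - σ x * ‖A x‖) μ := hintZA.sub hintσA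
      have hint0 : ∫ x, (⟪Zlim x, A x⟫ - σ x * ‖A x‖) ∂μ = 0 := by
        have hle : ∫ x, (⟪Zlim x, A x⟫ - σ x * ‖A x‖) ∂μ ≤ 0 := by
          rw [integral_sub hintZA hintσA]; linarith
        have hge : 0 ≤ ∫ x, (⟪Zlim x, A x⟫ - σ x * ‖A x‖) ∂μ :=
          integral_nonneg_of_ae hg_nonneg
        linarith
      have := (integral_eq_zero_iff_of_nonneg_ae hg_nonneg hgi).mp hint0
      filter_upwards [this] with x hx
      simpa using hx
    filter_upwards [hg0, hσσ', hZZ'] with x h0 h1 h2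
    by_contra hlt
    push_neg at hlt
    have hxS : x ∈ S := by
      show σ' x < ‖Z' x‖
      rw [← h1, ← h2]; exact hlt
    rw [hAdef, Set.indicator_of_mem hxS, real_inner_self_eq_norm_mul_norm] at h0
    nlinarith [norm_nonneg (Zlim x), hσ0 x]
  -- test field A2 := σ D/|D|
  set c : U → ℝ := fun x => σ' x / ‖D' x‖ with hcdef
  set A2 : U → M3 := fun x => c x • D' x with hA2def
  have hA2_sm : StronglyMeasurable A2 :=
    ((hσ'_meas.div hD'_sm.measurable.norm).stronglyMeasurable).smul hD'_sm
  have hA2_norm : ∀ x, ‖A2 x‖ ≤ σ' x := by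
    intro x
    show ‖(σ' x / ‖D' x‖) • D' x‖ ≤ σ' x
    rw [norm_smul, Real.norm_eq_abs, abs_div, abs_of_nonneg (hσ'0 x),
      abs_of_nonneg (norm_nonneg (D' x))]
    rcases eq_or_ne ‖D' x‖ 0 with h | h
    · simp [h, hσ'0 x]
    · rw [div_mul_cancel₀ _ h]
  have hA2_mem : MemLp A2 2 μ := by
    refine MemLp.of_le (hσ_mem.ae_eq hσσ') hA2_sm.aestronglyMeasurable
      (ae_of_all _ fun x => ?_)
    rw [Real.norm_eq_abs, abs_of_nonneg (hσ'0 x)]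
    exact hA2_norm x
  have hDA2 : ∀ x, ⟪D' x, A2 x⟫ = σ' x * ‖D' x‖ := by
    intro x
    show ⟪D' x, (σ' x / ‖D' x‖) • D' x⟫ = σ' x * ‖D' x‖
    rw [real_inner_smul_right, real_inner_self_eq_norm_mul_norm]
    rcases eq_or_ne ‖D' x‖ 0 with h | h
    · simp [h]
    · field_simp
  have hDA2int : ∫ x, ⟪Dlim x, A2 x⟫ ∂μ = ∫ x, σ x * ‖Dlim x‖ ∂μ := by
    refine integral_congr_ae ?_
    filter_upwards [hDD', hσσ'] with x h1 h2
    rw [h1, h2, hDA2 x]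
  -- convergence of ∫ τ n
  have hτint_tendsto : Tendsto (fun n => ∫ x, τ n x ∂μ) atTop (𝓝 (∫ x, σ x ∂μ)) := by
    have hbd : ∀ n, |∫ x, τ n x ∂μ - ∫ x, σ x ∂μ|
        ≤ δ n * (eLpNorm (fun _ : U => (1:ℝ)) 2 μ).toReal := by
      intro n
      have heq : ∫ x, τ n x ∂μ - ∫ x, σ x ∂μ = ∫ x, (τ n x - σ x) * 1 ∂μ := by
        rw [← integral_sub ((hτ_mem n).integrable one_le_two)
          (hσ_mem.integrable one_le_two)]
        exact integral_congr_ae (ae_of_all _ fun x => by ring)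
      rw [heq]
      refine (abs_integral_mul_le ((hτ_mem n).sub hσ_mem) (memLp_const 1)).trans ?_
      exact mul_le_mul_of_nonneg_right (hτσ n) ENNReal.toReal_nonneg
    have h0 : Tendsto (fun n => ∫ x, τ n x ∂μ - ∫ x, σ x ∂μ) atTop (𝓝 0) := by
      have hmc := hδ0.mul_const ((eLpNorm (fun _ : U => (1:ℝ)) 2 μ).toReal)
      rw [zero_mul] at hmc
      exact squeeze_zero_norm (fun n => by simpa [Real.norm_eq_abs] using hbd n) hmc
    have := h0.add_const (∫ x, σ x ∂μ)
    simpa using this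
  have hεint : Tendsto (fun n : ℕ => (1/((n:ℝ)+1)) * ∫ x, τ n x ∂μ) atTop (𝓝 0) := by
    have := tendsto_one_div_add_atTop_nhds_zero_nat.mul hτint_tendsto
    simpa using this
  -- the lower-bound sequence
  have ha_tendsto : Tendsto (fun n => ∫ x, ⟪D n x, A2 x⟫ ∂μ - δ n * C
      - (1/((n:ℝ)+1)) * ∫ x, τ n x ∂μ) atTop (𝓝 (∫ x, σ x * ‖Dlim x‖ ∂μ)) := by
    have h1 := hD_weak A2 hA2_mem
    have h3 := (h1.sub (hδ0.mul_const C)).sub hεint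
    have h2 : (∫ x, ⟪Dlim x, A2 x⟫ ∂μ - 0 * C) - 0 = ∫ x, σ x * ‖Dlim x‖ ∂μ := by
      rw [hDA2int]; ring
    rw [h2] at h3
    exact h3
  have h_an_le : ∀ n, ∫ x, ⟪D n x, A2 x⟫ ∂μ - δ n * C
      - (1/((n:ℝ)+1)) * ∫ x, τ n x ∂μ ≤ ∫ x, ⟪Z n x, D n x⟫ ∂μ := by
    intro n
    have hDn_norm : MemLp (fun x => ‖D n x‖) 2 μ := (hD_mem n).norm
    have hi1 : Integrable (fun x => τ n x * ‖D n x‖) μ :=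
      integrable_mul_of_memL2 (hτ_mem n) hDn_norm
    have hi2 : Integrable (fun x => σ x * ‖D n x‖) μ :=
      integrable_mul_of_memL2 hσ_mem hDn_norm
    have hi3 : Integrable (τ n) μ := (hτ_mem n).integrable one_le_two
    have hi4 : Integrable (fun x => ⟪D n x, A2 x⟫) μ :=
      integrable_inner_of_memL2 (hD_mem n) hA2_mem
    have hd : ∫ x, ⟪D n x, A2 x⟫ ∂μ ≤ ∫ x, σ x * ‖D n x‖ ∂μ := by
      refine integral_mono_ae hi4 hi2 ?_
      filter_upwards [hσσ'] with x h1
      calc ⟪D n x, A2 x⟫ ≤ ‖D n x‖ * ‖A2 x‖ := real_inner_le_norm _ _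
        _ ≤ ‖D n x‖ * σ' x := mul_le_mul_of_nonneg_left (hA2_norm x) (norm_nonneg _)
        _ = σ x * ‖D n x‖ := by rw [h1]; ring
    have hc' : ∫ x, σ x * ‖D n x‖ ∂μ - δ n * C ≤ ∫ x, τ n x * ‖D n x‖ ∂μ := by
      have heq : ∫ x, σ x * ‖D n x‖ ∂μ - ∫ x, τ n x * ‖D n x‖ ∂μ
          = ∫ x, (σ x - τ n x) * ‖D n x‖ ∂μ := by
        rw [← integral_sub hi2 hi1]
        exact integral_congr_ae (ae_of_all _ fun x => by ring)
      have hb : |∫ x, (σ x - τ n x) * ‖D n x‖ ∂μ| ≤ δ n * C := by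
        refine (abs_integral_mul_le (hσ_mem.sub (hτ_mem n)) hDn_norm).trans ?_
        rw [eLpNorm_norm]
        have hneg : (fun x => σ x - τ n x) = -(fun x => τ n x - σ x) := by
          funext x; show _ = -(τ n x - σ x); ring
        have h1' : (eLpNorm (fun x => σ x - τ n x) 2 μ).toReal ≤ δ n := by
          rw [hneg, eLpNorm_neg]; exact hτσ n
        exact mul_le_mul h1' (hC n) ENNReal.toReal_nonneg (hδnn n)
      have hX : ∫ x, σ x * ‖D n x‖ ∂μ - ∫ x, τ n x * ‖D n x‖ ∂μ ≤ δ n * C := by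
        rw [heq]; exact (le_abs_self _).trans hb
      linarith
    have hab : ∫ x, τ n x * ‖D n x‖ ∂μ - (1/((n:ℝ)+1)) * ∫ x, τ n x ∂μ
        ≤ ∫ x, ⟪Z n x, D n x⟫ ∂μ := by
      have hsub : ∫ x, (τ n x * ‖D n x‖ - (1/((n:ℝ)+1)) * τ n x) ∂μ
          ≤ ∫ x, ⟪Z n x, D n x⟫ ∂μ := by
        refine integral_mono_ae (hi1.sub (hi3.const_mul _))
          (integrable_inner_of_memL2 (hZ_mem n) (hD_mem n)) ?_
        exact hinnerZD n
      rw [integral_sub hi1 (hi3.const_mul _), integral_const_mul] at hsub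
      linarith
    linarith
  -- conclude ∫ σ ‖Dlim‖ ≤ ∫ ⟪Zlim, Dlim⟫
  have hfinal_int : ∫ x, σ x * ‖Dlim x‖ ∂μ ≤ ∫ x, ⟪Zlim x, Dlim x⟫ ∂μ := by
    obtain ⟨K, hK⟩ := hδ0.bddAbove_range
    have hKn : ∀ n, δ n ≤ K := fun n => hK ⟨n, rfl⟩
    have hbdd : IsBoundedUnder (· ≤ ·) atTop (fun n => ∫ x, ⟪Z n x, D n x⟫ ∂μ) := by
      refine isBoundedUnder_of ⟨((eLpNorm σ 2 μ).toReal + K) * C, fun n => ?_⟩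
      have h1 := abs_integral_inner_le (hZ_mem n) (hD_mem n)
      refine (le_abs_self _).trans (h1.trans ?_)
      have ha : eLpNorm (Z n) 2 μ ≤ eLpNorm (τ n) 2 μ := by
        refine eLpNorm_mono_ae ?_
        filter_upwards [hnormZ n] with x hx
        rw [Real.norm_eq_abs]
        exact hx.trans (le_abs_self _)
      have hb : eLpNorm (τ n) 2 μ ≤ eLpNorm σ 2 μ + eLpNorm (fun x => τ n x - σ x) 2 μ := by
        have heq : τ n = fun x => σ x + (τ n x - σ x) := by funext x; ring
        calc eLpNorm (τ n) 2 μ = eLpNorm (fun x => σ x + (τ n x - σ x)) 2 μ := by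
              rw [← heq]
          _ ≤ _ := eLpNorm_add_le hσ_mem.1 ((hτ_mem n).sub hσ_mem).1 one_le_two
      have hZτ : (eLpNorm (Z n) 2 μ).toReal ≤ (eLpNorm σ 2 μ).toReal + δ n := by
        calc (eLpNorm (Z n) 2 μ).toReal
            ≤ (eLpNorm σ 2 μ + eLpNorm (fun x => τ n x - σ x) 2 μ).toReal :=
              ENNReal.toReal_mono
                (ENNReal.add_ne_top.mpr ⟨hσ_mem.2.ne, ((hτ_mem n).sub hσ_mem).2.ne⟩)
                (ha.trans hb)
          _ = (eLpNorm σ 2 μ).toReal + (eLpNorm (fun x => τ n x - σ x) 2 μ).toReal :=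
              ENNReal.toReal_add hσ_mem.2.ne ((hτ_mem n).sub hσ_mem).2.ne
          _ ≤ (eLpNorm σ 2 μ).toReal + δ n := by linarith [hτσ n]
      calc (eLpNorm (Z n) 2 μ).toReal * (eLpNorm (D n) 2 μ).toReal
          ≤ ((eLpNorm σ 2 μ).toReal + δ n) * C := by
            refine mul_le_mul hZτ (hC n) ENNReal.toReal_nonneg ?_
            positivity
        _ ≤ ((eLpNorm σ 2 μ).toReal + K) * C := by
            refine mul_le_mul_of_nonneg_right ?_ hC0
            linarith [hKn n]
    refine le_of_forall_sub_le fun ε hε => ?_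
    have hev : ∀ᶠ n in atTop,
        ∫ x, σ x * ‖Dlim x‖ ∂μ - ε ≤ ∫ x, ⟪Z n x, D n x⟫ ∂μ := by
      have hgt := ha_tendsto.eventually
        (eventually_gt_nhds (show ∫ x, σ x * ‖Dlim x‖ ∂μ - ε < ∫ x, σ x * ‖Dlim x‖ ∂μ by
          linarith))
      filter_upwards [hgt] with n hn
      exact le_trans hn.le (h_an_le n)
    exact (le_limsup_of_frequently_le hev.frequently hbdd).trans hlimsup
  -- Step 2 : σ ‖Dlim‖ = ⟪Zlim, Dlim⟫ a.e.
  have hg2 : ∀ᵐ x ∂μ, σ x * ‖Dlim x‖ - ⟪Zlim x, Dlim x⟫ = 0 := by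
    have hi1 : Integrable (fun x => σ x * ‖Dlim x‖) μ :=
      integrable_mul_of_memL2 hσ_mem hDlim_mem.norm
    have hi2 : Integrable (fun x => ⟪Zlim x, Dlim x⟫) μ :=
      integrable_inner_of_memL2 hZlim_mem hDlim_mem
    have hnn : ∀ᵐ x ∂μ, 0 ≤ σ x * ‖Dlim x‖ - ⟪Zlim x, Dlim x⟫ := by
      filter_upwards [step1] with x hx
      have hcs := real_inner_le_norm (Zlim x) (Dlim x)
      nlinarith [norm_nonneg (Dlim x), norm_nonneg (Zlim x)]
    have hint0 : ∫ x, (σ x * ‖Dlim x‖ - ⟪Zlim x, Dlim x⟫) ∂μ = 0 := by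
      have h1 : ∫ x, (σ x * ‖Dlim x‖ - ⟪Zlim x, Dlim x⟫) ∂μ ≤ 0 := by
        rw [integral_sub hi1 hi2]; linarith
      have h2 : 0 ≤ ∫ x, (σ x * ‖Dlim x‖ - ⟪Zlim x, Dlim x⟫) ∂μ :=
        integral_nonneg_of_ae hnn
      linarith
    have := (integral_eq_zero_iff_of_nonneg_ae hnn (hi1.sub hi2)).mp hint0
    filter_upwards [this] with x hx
    simpa using hx
  -- final pointwise conclusion
  filter_upwards [step1, hg2] with x h1 h2
  have hσx : 0 ≤ σ x := hσ0 x
  have hip : ⟪Zlim x, Dlim x⟫ = σ x * ‖Dlim x‖ := by linarith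
  show max (‖Zlim x‖ - σ x) 0 + ‖(‖Dlim x‖) • Zlim x - σ x • Dlim x‖ = 0
  have hmax : max (‖Zlim x‖ - σ x) 0 = 0 := max_eq_right (by linarith)
  have hnormsq : ‖(‖Dlim x‖) • Zlim x - σ x • Dlim x‖ ^ 2 ≤ 0 := by
    rw [norm_sub_sq_real, real_inner_smul_left, real_inner_smul_right, hip,
      norm_smul, norm_smul, Real.norm_eq_abs, abs_of_nonneg (norm_nonneg (Dlim x)),
      Real.norm_eq_abs, abs_of_nonneg hσx]
    nlinarith [mul_le_mul h1 h1 (norm_nonneg (Zlim x)) hσx, sq_nonneg (‖Dlim x‖),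
      norm_nonneg (Dlim x), norm_nonneg (Zlim x)]
  have hsq : ‖(‖Dlim x‖) • Zlim x - σ x • Dlim x‖ ^ 2 = 0 :=
    le_antisymm hnormsq (sq_nonneg _)
  have hzero : ‖(‖Dlim x‖) • Zlim x - σ x • Dlim x‖ = 0 :=
    (pow_eq_zero_iff two_ne_zero).mp hsq
  rw [hmax, hzero, add_zero]
end

section
/- (Vanishing of the negative part, claim (5.19)/(6.60).) Let (U, μ) be a finite measure space and p_s ∈ L²(U) measurable; set τ(p) := (p_s − p)⁺. Let {p_fⁿ} ⊂ L²(U) with p_fⁿ → p_f strongly in L²(U), and let {Dⁿ} ⊂ L²(U; M₃) be bounded in L²(U; M₃) and D ∈ L²(U; M₃). Define Zⁿ := τ(p_fⁿ) Dⁿ/(|Dⁿ| + 1/n) a.e., and define Z̄ := 0 on the set where D = 0 and Z̄ := τ(p_f) D/|D| on the set where D ≠ 0. Then the negative parts satisfy ( (Zⁿ − Z̄) : (Dⁿ − D) )⁻ → 0 strongly in L¹(U), where x⁻ := max(−x, 0). -/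
open MeasureTheory Filter Classical
open scoped RealInnerProductSpace Topology ENNReal

lemma key_pointwise {E : Type*} [NormedAddCommGroup E] [InnerProductSpace ℝ E]
    (a b ε : ℝ) (ha : 0 ≤ a) (hb : 0 ≤ b) (hε : 0 < ε) (A B : E) :
    max (-(⟪(a / (‖A‖ + ε)) • A - (if B = 0 then 0 else (b / ‖B‖) • B), A - B⟫)) 0
      ≤ |a - b| * (‖A‖ + ‖B‖) + a * ε := by
  have hnA : (0:ℝ) ≤ ‖A‖ := norm_nonneg A
  have hnB : (0:ℝ) ≤ ‖B‖ := norm_nonneg B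
  have hs : (0:ℝ) < ‖A‖ + ε := by linarith
  by_cases hB : B = 0
  · subst hB
    rw [if_pos rfl, sub_zero, sub_zero, real_inner_smul_left,
      real_inner_self_eq_norm_sq, norm_zero]
    have h2 : 0 ≤ a / (‖A‖ + ε) * ‖A‖ ^ 2 := by positivity
    apply max_le _ (by positivity)
    nlinarith [abs_nonneg (a - b)]
  · rw [if_neg hB]
    have hnB0 : (0:ℝ) < ‖B‖ := norm_pos_iff.mpr hB
    have hAB : ⟪A, B⟫ ≤ ‖A‖ * ‖B‖ := real_inner_le_norm A B
    have hBA : ⟪B, A⟫ ≤ ‖A‖ * ‖B‖ := by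
      rw [real_inner_comm]; exact hAB
    have hI : ⟪(a / (‖A‖ + ε)) • A - (b / ‖B‖) • B, A - B⟫
        = (a / (‖A‖ + ε)) * (‖A‖ ^ 2 - ⟪A, B⟫) - (b / ‖B‖) * (⟪B, A⟫ - ‖B‖ ^ 2) := by
      rw [inner_sub_left, real_inner_smul_left, real_inner_smul_left, inner_sub_right,
        inner_sub_right, real_inner_self_eq_norm_sq, real_inner_self_eq_norm_sq]
    rw [hI]
    have h1 : (a / (‖A‖ + ε)) * (‖A‖ ^ 2 - ⟪A, B⟫) ≥ (a / (‖A‖ + ε)) * (‖A‖ ^ 2 - ‖A‖ * ‖B‖) := by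
      apply mul_le_mul_of_nonneg_left (by linarith) (by positivity)
    have h2 : (a / (‖A‖ + ε)) * (‖A‖ ^ 2 - ‖A‖ * ‖B‖) ≥ a * (‖A‖ - ‖B‖) - a * ε := by
      rw [ge_iff_le, div_mul_eq_mul_div, le_div_iff₀ hs]
      nlinarith [mul_nonneg (mul_nonneg ha hnB) hε.le, mul_nonneg ha (mul_pos hε hε).le]
    have h3 : (b / ‖B‖) * (⟪B, A⟫ - ‖B‖ ^ 2) ≤ b * (‖A‖ - ‖B‖) := by
      have : (b / ‖B‖) * (⟪B, A⟫ - ‖B‖ ^ 2) ≤ (b / ‖B‖) * (‖A‖ * ‖B‖ - ‖B‖ ^ 2) :=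
        mul_le_mul_of_nonneg_left (by linarith) (by positivity)
      calc (b / ‖B‖) * (⟪B, A⟫ - ‖B‖ ^ 2) ≤ (b / ‖B‖) * (‖A‖ * ‖B‖ - ‖B‖ ^ 2) := this
        _ = b * (‖A‖ - ‖B‖) := by field_simp
    have habs : |(a - b) * (‖A‖ - ‖B‖)| ≤ |a - b| * (‖A‖ + ‖B‖) := by
      rw [abs_mul]
      apply mul_le_mul_of_nonneg_left _ (abs_nonneg _)
      rw [abs_le]; constructor <;> linarith
    apply max_le _ (by positivity)
    nlinarith [neg_abs_le ((a - b) * (‖A‖ - ‖B‖))]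

/-- Vanishing of the negative part (claim (5.19)/(6.60)): on a finite measure space, with
`τ(p) := (p_s − p)⁺`, if `p_fⁿ → p_f` strongly in `L²(U)`, `{Dⁿ}` is bounded in
`L²(U; M₃)`, `Zⁿ := τ(p_fⁿ) Dⁿ/(|Dⁿ| + 1/n)`, and `Z̄ := 0` where `D = 0`,
`Z̄ := τ(p_f) D/|D|` where `D ≠ 0`, then `((Zⁿ − Z̄) : (Dⁿ − D))⁻ → 0` strongly in
`L¹(U)`.  (Sequences are indexed by `n : ℕ`, the regularization parameter being
`1/(n+1)`.) -/
theorem negative_part_vanishes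
    {U : Type*} [MeasurableSpace U] (μ : Measure U) [IsFiniteMeasure μ]
    (ps : U → ℝ) (hps_meas : Measurable ps) (hps_mem : MemLp ps 2 μ)
    (pf : ℕ → U → ℝ) (pflim : U → ℝ)
    (hpf_mem : ∀ n, MemLp (pf n) 2 μ) (hpflim_mem : MemLp pflim 2 μ)
    (hpf_strong : Tendsto (fun n => eLpNorm (pf n - pflim) 2 μ) atTop (𝓝 0))
    (D : ℕ → U → M3) (Dlim : U → M3)
    (hD_mem : ∀ n, MemLp (D n) 2 μ) (hDlim_mem : MemLp Dlim 2 μ)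
    (CD : ℝ≥0∞) (hCD : CD ≠ ⊤) (hD_bdd : ∀ n, eLpNorm (D n) 2 μ ≤ CD) :
    Tendsto (fun n =>
      eLpNorm (fun x =>
        max (-(⟪(max (ps x - pf n x) 0 / (‖D n x‖ + 1 / (n + 1))) • D n x -
                (if Dlim x = 0 then 0
                  else (max (ps x - pflim x) 0 / ‖Dlim x‖) • Dlim x),
              D n x - Dlim x⟫)) 0) 1 μ)
      atTop (𝓝 0) := by
  -- notation
  set X : ℕ → ℝ≥0∞ := fun n => eLpNorm (pf n - pflim) 2 μ with hX
  set ND : ℝ≥0∞ := eLpNorm Dlim 2 μ with hND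
  set S : ℝ≥0∞ := eLpNorm ps 2 μ with hS
  set P : ℝ≥0∞ := eLpNorm pflim 2 μ with hP
  set M : ℝ≥0∞ := μ Set.univ ^ (1 / (1:ℝ≥0∞).toReal - 1 / (2:ℝ≥0∞).toReal) with hM
  have hMne : M ≠ ⊤ := by
    apply ENNReal.rpow_ne_top_of_nonneg
    · norm_num
    · exact (measure_ne_top μ _)
  have hNDne : ND ≠ ⊤ := hDlim_mem.2.ne
  have hSne : S ≠ ⊤ := hps_mem.2.ne
  have hPne : P ≠ ⊤ := hpflim_mem.2.ne
  set B : ℕ → ℝ≥0∞ := fun n =>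
    X n * (CD + ND) + (‖(1 / ((n:ℝ) + 1) : ℝ)‖₊ : ℝ≥0∞) * ((S + P + X n) * M) with hB
  -- the main bound
  have hbound : ∀ n, eLpNorm (fun x =>
        max (-(⟪(max (ps x - pf n x) 0 / (‖D n x‖ + 1 / (n + 1))) • D n x -
                (if Dlim x = 0 then 0
                  else (max (ps x - pflim x) 0 / ‖Dlim x‖) • Dlim x),
              D n x - Dlim x⟫)) 0) 1 μ ≤ B n := by
    intro n
    have hpsm := hps_mem.aestronglyMeasurable
    have hpfn := (hpf_mem n).aestronglyMeasurable
    have hpfl := hpflim_mem.aestronglyMeasurable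
    have hDn := (hD_mem n).aestronglyMeasurable
    have hDl := hDlim_mem.aestronglyMeasurable
    set ε : ℝ := 1 / ((n:ℝ) + 1) with hε
    have hεpos : 0 < ε := by positivity
    set φ : U → ℝ := fun x => ‖pf n x - pflim x‖ with hφ
    set ψ : U → ℝ := fun x => ‖D n x‖ + ‖Dlim x‖ with hψ
    set χ : U → ℝ := fun x => ‖ps x‖ + ‖pflim x‖ + ‖pf n x - pflim x‖ with hχ
    have hφm : AEStronglyMeasurable φ μ := (hpfn.sub hpfl).norm
    have hψm : AEStronglyMeasurable ψ μ := hDn.norm.add hDl.norm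
    have hχm : AEStronglyMeasurable χ μ := (hpsm.norm.add hpfl.norm).add (hpfn.sub hpfl).norm
    -- pointwise bound
    have step1 : eLpNorm (fun x =>
        max (-(⟪(max (ps x - pf n x) 0 / (‖D n x‖ + ε)) • D n x -
                (if Dlim x = 0 then 0
                  else (max (ps x - pflim x) 0 / ‖Dlim x‖) • Dlim x),
              D n x - Dlim x⟫)) 0) 1 μ
        ≤ eLpNorm (fun x => φ x * ψ x + ε * χ x) 1 μ := by
      apply eLpNorm_mono
      intro x
      rw [Real.norm_eq_abs, Real.norm_eq_abs, abs_of_nonneg (le_max_right _ _),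
        abs_of_nonneg (by positivity)]
      set a : ℝ := max (ps x - pf n x) 0 with hadef
      set b : ℝ := max (ps x - pflim x) 0 with hbdef
      have hkey := key_pointwise a b ε (le_max_right _ _) (le_max_right _ _) hεpos
        (D n x) (Dlim x)
      refine le_trans (le_of_eq (by congr!)) (hkey.trans ?_)
      have h1 : |a - b| ≤ φ x := by
        have h := abs_max_sub_max_le_abs (ps x - pf n x) (ps x - pflim x) 0
        have he : (ps x - pf n x) - (ps x - pflim x) = -(pf n x - pflim x) := by ring
        rw [he, abs_neg] at h
        simpa [hφ, Real.norm_eq_abs] using h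
      have h2 : a ≤ χ x := by
        apply max_le _ (by positivity)
        simp only [hχ, Real.norm_eq_abs]
        have := le_abs_self (ps x)
        have := neg_abs_le (pflim x)
        have := neg_abs_le (pf n x - pflim x)
        linarith
      have hφ0 : 0 ≤ φ x := norm_nonneg _
      have hψ0 : 0 ≤ ψ x := by positivity
      have hab : |a - b| * (‖D n x‖ + ‖Dlim x‖) ≤ φ x * ψ x :=
        mul_le_mul_of_nonneg_right h1 (by positivity)
      have haε : a * ε ≤ ε * χ x := by
        rw [mul_comm]
        exact mul_le_mul_of_nonneg_left h2 hεpos.le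
      exact add_le_add hab haε
    refine step1.trans ?_
    have step2 : eLpNorm (fun x => φ x * ψ x + ε * χ x) 1 μ
        ≤ eLpNorm (fun x => φ x * ψ x) 1 μ + eLpNorm (fun x => ε * χ x) 1 μ :=
      eLpNorm_add_le (hφm.mul hψm) (aestronglyMeasurable_const.mul hχm) le_rfl
    refine step2.trans ?_
    have step3 : eLpNorm (fun x => φ x * ψ x) 1 μ ≤ eLpNorm φ 2 μ * eLpNorm ψ 2 μ := by
      have h := eLpNorm_smul_le_mul_eLpNorm (p := 2) (q := 2) (r := 1)
        (f := ψ) (φ := φ) hψm hφm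
      exact h
    have hφ2 : eLpNorm φ 2 μ = X n := by
      rw [hX]
      exact eLpNorm_norm (pf n - pflim)
    have hψ2 : eLpNorm ψ 2 μ ≤ CD + ND := by
      have h := eLpNorm_add_le (p := 2) (μ := μ)
        (f := fun x => ‖D n x‖) (g := fun x => ‖Dlim x‖) hDn.norm hDl.norm one_le_two
      rw [eLpNorm_norm, eLpNorm_norm] at h
      exact h.trans (add_le_add (hD_bdd n) le_rfl)
    have step4 : eLpNorm (fun x => ε * χ x) 1 μ
        = (‖ε‖₊ : ℝ≥0∞) * eLpNorm χ 1 μ := eLpNorm_const_smul ε χ 1 μ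
    have hχ1 : eLpNorm χ 1 μ ≤ (S + P + X n) * M := by
      have e1 : eLpNorm (fun x => ‖ps x‖) 1 μ ≤ S * M := by
        have h := eLpNorm_le_eLpNorm_mul_rpow_measure_univ (p := 1) (q := 2) (μ := μ)
          (f := fun x => ‖ps x‖) one_le_two hpsm.norm
        exact h.trans_eq (by rw [eLpNorm_norm])
      have e2 : eLpNorm (fun x => ‖pflim x‖) 1 μ ≤ P * M := by
        have h := eLpNorm_le_eLpNorm_mul_rpow_measure_univ (p := 1) (q := 2) (μ := μ)
          (f := fun x => ‖pflim x‖) one_le_two hpfl.norm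
        exact h.trans_eq (by rw [eLpNorm_norm])
      have e3 : eLpNorm (fun x => ‖pf n x - pflim x‖) 1 μ ≤ X n * M := by
        have h := eLpNorm_le_eLpNorm_mul_rpow_measure_univ (p := 1) (q := 2) (μ := μ)
          (f := fun x => ‖pf n x - pflim x‖) one_le_two (hpfn.sub hpfl).norm
        refine h.trans_eq ?_
        have : eLpNorm (fun x => ‖pf n x - pflim x‖) 2 μ = X n :=
          eLpNorm_norm (pf n - pflim)
        rw [this]
      have hsplit : eLpNorm χ 1 μ ≤ eLpNorm (fun x => ‖ps x‖ + ‖pflim x‖) 1 μ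
          + eLpNorm (fun x => ‖pf n x - pflim x‖) 1 μ :=
        eLpNorm_add_le (hpsm.norm.add hpfl.norm) (hpfn.sub hpfl).norm le_rfl
      have hsplit2 : eLpNorm (fun x => ‖ps x‖ + ‖pflim x‖) 1 μ
          ≤ eLpNorm (fun x => ‖ps x‖) 1 μ + eLpNorm (fun x => ‖pflim x‖) 1 μ :=
        eLpNorm_add_le hpsm.norm hpfl.norm le_rfl
      calc eLpNorm χ 1 μ ≤ _ + _ := hsplit
        _ ≤ (eLpNorm (fun x => ‖ps x‖) 1 μ + eLpNorm (fun x => ‖pflim x‖) 1 μ)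
              + eLpNorm (fun x => ‖pf n x - pflim x‖) 1 μ := add_le_add_left hsplit2 _
        _ ≤ S * M + P * M + X n * M := by
              exact add_le_add (add_le_add e1 e2) e3
        _ = (S + P + X n) * M := by ring
    calc eLpNorm (fun x => φ x * ψ x) 1 μ + eLpNorm (fun x => ε * χ x) 1 μ
        ≤ eLpNorm φ 2 μ * eLpNorm ψ 2 μ + (‖ε‖₊ : ℝ≥0∞) * eLpNorm χ 1 μ := by
          rw [step4]; exact add_le_add step3 le_rfl
      _ ≤ X n * (CD + ND) + (‖ε‖₊ : ℝ≥0∞) * ((S + P + X n) * M) := by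
          refine add_le_add ?_ (mul_le_mul_right hχ1 _)
          rw [hφ2]
          exact mul_le_mul_right hψ2 _
      _ = B n := rfl
  -- the bound tends to zero
  have hB0 : Tendsto B atTop (𝓝 0) := by
    have t1 : Tendsto (fun n => X n * (CD + ND)) atTop (𝓝 0) := by
      have := ENNReal.Tendsto.mul_const hpf_strong
        (Or.inr (ENNReal.add_ne_top.mpr ⟨hCD, hNDne⟩))
      simpa only [zero_mul] using this
    have t2 : Tendsto (fun n : ℕ => (‖(1 / ((n:ℝ) + 1) : ℝ)‖₊ : ℝ≥0∞)) atTop (𝓝 0) := by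
      have h : Tendsto (fun n : ℕ => ‖(1 / ((n:ℝ) + 1) : ℝ)‖₊) atTop (𝓝 0) := by
        simpa [Function.comp_def] using (continuous_nnnorm.tendsto (0:ℝ)).comp tendsto_one_div_add_atTop_nhds_zero_nat
      simpa using ENNReal.tendsto_coe.mpr h
    have t3 : Tendsto (fun n => (S + P + X n) * M) atTop (𝓝 ((S + P + 0) * M)) := by
      exact ENNReal.Tendsto.mul_const (tendsto_const_nhds.add hpf_strong) (Or.inr hMne)
    have t4 : Tendsto (fun n : ℕ =>
        (‖(1 / ((n:ℝ) + 1) : ℝ)‖₊ : ℝ≥0∞) * ((S + P + X n) * M)) atTop (𝓝 0) := by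
      have := ENNReal.Tendsto.mul t2
        (Or.inr (ENNReal.mul_ne_top (by simp [ENNReal.add_ne_top, hSne, hPne]) hMne)) t3
        (Or.inr (by simp))
      simpa only [zero_mul] using this
    simpa only [add_zero] using t1.add t4
  exact tendsto_of_tendsto_of_tendsto_of_le_of_le tendsto_const_nhds hB0
    (fun n => zero_le) hbound
end

section
/- (Monotonicity and implicit relation on the boundary, vector versions of (monSp1), (monSp2) and (2.10).) Let s_* ≥ 0, β_* ≥ 0 and ε > 0 be real numbers. Then: (i) for all u, w ∈ ℝ³, ( s_* u/(|u| + ε) − s_* w/(|w| + ε) ) · (u − w) ≥ 0; (ii) for all u, w ∈ ℝ³, ( g(u) − g(w) ) · (u − w) ≥ 0, where g(u) := (1 − β_*/|u|)⁺ u for u ≠ 0 and g(0) := 0; (iii) for z, v ∈ ℝ³, the relation (|z| − s_*)⁺ + | |v| z − s_* v | = 0 holds if and only if (v = 0 implies |z| ≤ s_*) and (v ≠ 0 implies z = s_* v/|v|). -/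
open Classical
open scoped RealInnerProductSpace

/-- `ℝ³` with the Euclidean inner product. -/
abbrev V3 := EuclideanSpace ℝ (Fin 3)

lemma mono_aux (u w : V3) (a b : ℝ) (ha : 0 ≤ a) (hb : 0 ≤ b)
    (h : 0 ≤ (a * ‖u‖ - b * ‖w‖) * (‖u‖ - ‖w‖)) :
    0 ≤ ⟪a • u - b • w, u - w⟫ := by
  have h1 := real_inner_le_norm u w
  have h2 : ⟪u, u⟫ = ‖u‖ ^ 2 := real_inner_self_eq_norm_sq u
  have h3 : ⟪w, w⟫ = ‖w‖ ^ 2 := real_inner_self_eq_norm_sq w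
  have h4 : ⟪w, u⟫ = ⟪u, w⟫ := real_inner_comm u w
  simp only [inner_sub_left, inner_sub_right, real_inner_smul_left]
  nlinarith [norm_nonneg u, norm_nonneg w]

/-- Monotonicity and implicit relation on the boundary (vector versions of (monSp1),
(monSp2) and (2.10)): for `s_* ≥ 0`, `β_* ≥ 0`, `ε > 0`,
(i) `(s_* u/(|u|+ε) − s_* w/(|w|+ε)) · (u − w) ≥ 0` for all `u, w ∈ ℝ³`;
(ii) `(g(u) − g(w)) · (u − w) ≥ 0` where `g(u) := (1 − β_*/|u|)⁺ u` for `u ≠ 0`,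
`g(0) := 0`;
(iii) `(|z| − s_*)⁺ + ||v| z − s_* v| = 0` iff (`v = 0 → |z| ≤ s_*`) and
(`v ≠ 0 → z = s_* v/|v|`). -/
theorem boundary_monotonicity_and_implicit_relation
    (s β ε : ℝ) (hs : 0 ≤ s) (hβ : 0 ≤ β) (hε : 0 < ε) :
    (∀ u w : V3, 0 ≤ ⟪(s / (‖u‖ + ε)) • u - (s / (‖w‖ + ε)) • w, u - w⟫) ∧
    (∀ u w : V3,
      0 ≤ ⟪(if u = 0 then 0 else (max (1 - β / ‖u‖) 0) • u) -
            (if w = 0 then 0 else (max (1 - β / ‖w‖) 0) • w), u - w⟫) ∧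
    (∀ z v : V3,
      max (‖z‖ - s) 0 + ‖(‖v‖) • z - s • v‖ = 0 ↔
        ((v = 0 → ‖z‖ ≤ s) ∧ (v ≠ 0 → z = (s / ‖v‖) • v))) := by
  refine ⟨?_, ?_, ?_⟩
  · intro u w
    have hu : 0 ≤ ‖u‖ := norm_nonneg u
    have hw : 0 ≤ ‖w‖ := norm_nonneg w
    have hu' : 0 < ‖u‖ + ε := by linarith
    have hw' : 0 < ‖w‖ + ε := by linarith
    apply mono_aux _ _ _ _ (by positivity) (by positivity)
    have key : (s / (‖u‖ + ε)) * ‖u‖ - (s / (‖w‖ + ε)) * ‖w‖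
        = s * ε * (‖u‖ - ‖w‖) / ((‖u‖ + ε) * (‖w‖ + ε)) := by
      field_simp
      ring
    rw [key, div_mul_eq_mul_div]
    apply div_nonneg _ (by positivity)
    nlinarith [mul_nonneg (mul_nonneg hs hε.le) (mul_self_nonneg (‖u‖ - ‖w‖))]
  · intro u w
    have key : ∀ x : V3,
        (if x = 0 then 0 else (max (1 - β / ‖x‖) 0) • x)
          = (if x = 0 then (0:ℝ) else max (1 - β / ‖x‖) 0) • x := by
      intro x
      by_cases hx : x = 0 <;> simp [hx]
    rw [key u, key w]
    have hmx : ∀ x : V3,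
        (if x = 0 then (0:ℝ) else max (1 - β / ‖x‖) 0) * ‖x‖ = max (‖x‖ - β) 0 := by
      intro x
      by_cases hx : x = 0
      · simp [hx, max_eq_right, hβ]
      · have hx' : 0 < ‖x‖ := norm_pos_iff.mpr hx
        simp only [hx, if_neg, if_false]
        rw [max_mul_of_nonneg _ _ hx'.le, sub_mul, one_mul, div_mul_cancel₀ _ hx'.ne',
          zero_mul]
    apply mono_aux _ _ _ _ ?_ ?_
    · rw [hmx u, hmx w]
      rcases max_cases (‖u‖ - β) 0 with ⟨e1, e2⟩ | ⟨e1, e2⟩ <;>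
        rcases max_cases (‖w‖ - β) 0 with ⟨f1, f2⟩ | ⟨f1, f2⟩ <;>
        rw [e1, f1] <;> nlinarith [mul_self_nonneg (‖u‖ - ‖w‖)]
    · by_cases hu : u = 0 <;> simp [hu, le_max_right]
    · by_cases hw : w = 0 <;> simp [hw, le_max_right]
  · intro z v
    constructor
    · intro h
      have h1 : max (‖z‖ - s) 0 = 0 ∧ ‖(‖v‖) • z - s • v‖ = 0 := by
        constructor <;> nlinarith [le_max_right (‖z‖ - s) 0,
          norm_nonneg ((‖v‖) • z - s • v)]
      have hz : ‖z‖ ≤ s := by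
        have h2 := le_max_left (‖z‖ - s) 0
        rw [h1.1] at h2; linarith
      have hv : (‖v‖) • z = s • v := sub_eq_zero.mp (norm_eq_zero.mp h1.2)
      exact ⟨fun _ => hz, fun hv0 => by
        have hvp : (0:ℝ) < ‖v‖ := norm_pos_iff.mpr hv0
        have := congrArg (fun x : V3 => (‖v‖)⁻¹ • x) hv
        simpa [smul_smul, inv_mul_cancel₀ hvp.ne', div_eq_inv_mul, mul_comm] using this⟩
    · rintro ⟨h0, h1⟩
      by_cases hv : v = 0
      · have := h0 hv
        simp [hv, max_eq_right, sub_nonpos.mpr this]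
      · have hvp : (0:ℝ) < ‖v‖ := norm_pos_iff.mpr hv
        have hz := h1 hv
        have hnz : ‖z‖ = s := by
          rw [hz, norm_smul, Real.norm_eq_abs, abs_of_nonneg (by positivity),
            div_mul_cancel₀ _ hvp.ne']
        have hvz : (‖v‖) • z = s • v := by
          rw [hz, smul_smul]
          congr 1
          field_simp
        simp [hvz, hnz]
end
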